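/- Let G be a connected simple graph and let W be the annular subgraph of G, i.e., the subgraph of G induced by the annulus A(G). If W is nonempty and connected, then rad(W) ≥ 2, and consequently |A(G)| ≥ 4. -/

import Mathlib

/-- Eccentricity of a vertex in a (finite connected) simple graph:
the maximum distance from `v` to any vertex. -/
noncomputable def SimpleGraph.mecc {V : Type*} (G : SimpleGraph V) (v : V) : ℕ :=
  sSup (Set.range (G.dist v))

/-- Radius: the minimum eccentricity. -/
noncomputable def SimpleGraph.mrad {V : Type*} (G : SimpleGraph V) : ℕ :=
  sInf (Set.range G.mecc)

/-- Diameter: the maximum eccentricity. -/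
noncomputable def SimpleGraph.mdiam {V : Type*} (G : SimpleGraph V) : ℕ :=
  sSup (Set.range G.mecc)

/-- The center: the set of vertices of minimum eccentricity. -/
noncomputable def SimpleGraph.mcenter {V : Type*} (G : SimpleGraph V) : Set V :=
  {v | G.mecc v = G.mrad}

/-- The annulus: the set of vertices of intermediate eccentricity. -/
noncomputable def SimpleGraph.mannulus {V : Type*} (G : SimpleGraph V) : Set V :=
  {v | G.mrad < G.mecc v ∧ G.mecc v < G.mdiam}

/-- The periphery: the set of vertices of maximum eccentricity. -/
noncomputable def SimpleGraph.mperiphery {V : Type*} (G : SimpleGraph V) : Set V :=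
  {v | G.mecc v = G.mdiam}

section Aux

variable {V : Type*}

/-- The eccentricity is attained. -/
lemma mecc_exists [Finite V] (G : SimpleGraph V) (v : V) :
    ∃ u, G.dist v u = G.mecc v :=
  Nat.sSup_mem (⟨G.dist v v, v, rfl⟩ : (Set.range (G.dist v)).Nonempty)
    (Set.finite_range _).bddAbove

lemma dist_le_mecc [Finite V] (G : SimpleGraph V) (v u : V) :
    G.dist v u ≤ G.mecc v :=
  le_csSup (Set.finite_range _).bddAbove ⟨u, rfl⟩

lemma mecc_le_mdiam [Finite V] (G : SimpleGraph V) (v : V) :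
    G.mecc v ≤ G.mdiam :=
  le_csSup (Set.finite_range _).bddAbove ⟨v, rfl⟩

lemma mrad_le_mecc (G : SimpleGraph V) (v : V) : G.mrad ≤ G.mecc v :=
  Nat.sInf_le ⟨v, rfl⟩

lemma exists_mecc_eq_mrad [Nonempty V] (G : SimpleGraph V) :
    ∃ c, G.mecc c = G.mrad :=
  Nat.sInf_mem (Set.range_nonempty _)

/-- Discrete intermediate value theorem along a walk, for a function which is
1-Lipschitz along edges, with a bound on the distance from the found vertex to
the end of the walk. -/
lemma walk_ivt (G : SimpleGraph V) (f : V → ℕ)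
    (hf : ∀ a b, G.Adj a b → f a ≤ f b + 1) {x u : V} (p : G.Walk x u) :
    ∀ m : ℕ, f x ≤ m → m ≤ f u → ∃ y, f y = m ∧ G.dist y u + (m - f x) ≤ p.length := by
  induction p with
  | nil =>
    intro m h1 h2
    refine ⟨_, le_antisymm h1 h2, ?_⟩
    simp [SimpleGraph.dist_self]
    omega
  | @cons a b u h q ih =>
    intro m h1 h2
    have hba : f b ≤ f a + 1 := hf b a h.symm
    by_cases hc : f b ≤ m
    · obtain ⟨y, hy, hd⟩ := ih m hc h2
      refine ⟨y, hy, ?_⟩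
      simp only [SimpleGraph.Walk.length_cons]
      omega
    · have hm : f a = m := by omega
      refine ⟨a, hm, ?_⟩
      have := SimpleGraph.dist_le (SimpleGraph.Walk.cons h q)
      simp only [SimpleGraph.Walk.length_cons] at this ⊢
      omega

end Aux

theorem connected_annular_subgraph_radius_and_order
    {V : Type*} [Fintype V] (G : SimpleGraph V) (hG : G.Connected)
    (hW : G.mannulus.Nonempty) (hWc : (G.induce G.mannulus).Connected) :
    2 ≤ (G.induce G.mannulus).mrad ∧ 4 ≤ G.mannulus.ncard := by
  classical
  obtain ⟨v₀, hv₀⟩ := hW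
  haveI : Nonempty V := ⟨v₀⟩
  -- Main claim: no vertex of the annulus dominates the annulus.
  have claim : ∀ v ∈ G.mannulus, ∃ a ∈ G.mannulus, a ≠ v ∧ ¬ G.Adj v a := by
    intro v hv
    by_contra hcon
    push_neg at hcon
    have hdom : ∀ a ∈ G.mannulus, G.dist v a ≤ 1 := by
      intro a ha
      by_cases hav : a = v
      · subst hav; simp [SimpleGraph.dist_self]
      · exact le_of_eq (SimpleGraph.dist_eq_one_iff_adj.mpr (hcon a ha hav))
    obtain ⟨hr, hd⟩ := hv
    obtain ⟨u, hu⟩ := mecc_exists G v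
    obtain ⟨c, hc⟩ := exists_mecc_eq_mrad G
    -- an eccentric vertex of `v` is peripheral
    have hud : G.mecc u = G.mdiam := by
      by_contra hne
      have h1 : G.dist u v ≤ G.mecc u := dist_le_mecc G u v
      rw [SimpleGraph.dist_comm, hu] at h1
      have hu_mem : u ∈ G.mannulus :=
        ⟨lt_of_lt_of_le hr h1, lt_of_le_of_ne (mecc_le_mdiam G u) hne⟩
      have h2 := hdom u hu_mem
      -- ecc v ≤ 1, so mrad = 0 and V is a single vertex: contradiction
      have hc0 : G.mecc c = 0 := by omega
      have hcv : G.dist c v = 0 := by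
        have := dist_le_mecc G c v; omega
      have hcu : G.dist c u = 0 := by
        have := dist_le_mecc G c u; omega
      have hv' : c = v := (hG.dist_eq_zero_iff).mp hcv
      have hu' : c = u := (hG.dist_eq_zero_iff).mp hcu
      have hvu : v = u := hv' ▸ hu'
      rw [← hvu, SimpleGraph.dist_self] at hu
      omega
    -- intermediate value argument along a shortest walk from a center to `u`
    have hℓ : G.dist c u ≤ G.mrad := by
      have := dist_le_mecc G c u; omega
    obtain ⟨p, hp⟩ := hG.exists_walk_length_eq_dist c u
    have hf : ∀ a b, G.Adj a b → G.mecc a ≤ G.mecc b + 1 := by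
      intro a b hab
      obtain ⟨w, hw⟩ := mecc_exists G a
      have ht : G.dist a w ≤ G.dist a b + G.dist b w := hG.dist_triangle
      have h1 : G.dist a b = 1 := SimpleGraph.dist_eq_one_iff_adj.mpr hab
      have h2 : G.dist b w ≤ G.mecc b := dist_le_mecc G b w
      omega
    obtain ⟨y, hy, hyd⟩ := walk_ivt G G.mecc hf p (G.mrad + 1)
      (by omega) (by rw [hud]; omega)
    rw [hc, hp] at hyd
    have hyA : y ∈ G.mannulus := ⟨by omega, by omega⟩
    have h1 := hdom y hyA
    have h2 : G.dist v u ≤ G.dist v y + G.dist y u := hG.dist_triangle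
    omega
  -- Pass to the annular subgraph.
  set W := G.induce G.mannulus with hWdef
  haveI : Nonempty ↥G.mannulus := ⟨⟨v₀, hv₀⟩⟩
  -- every vertex of W has a vertex at distance ≥ 2 in W, in fact its
  -- eccentricity in W is ≥ 2
  have hWecc : ∀ x : ↥G.mannulus, 2 ≤ W.mecc x := by
    intro x
    obtain ⟨a, haA, hane, hnadj⟩ := claim x x.2
    have hxa : 2 ≤ W.dist x ⟨a, haA⟩ := by
      have hne : x ≠ ⟨a, haA⟩ := by
        intro h; exact hane (by rw [h])
      have h0 : 0 < W.dist x ⟨a, haA⟩ := hWc.pos_dist_of_ne hne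
      have h1 : W.dist x ⟨a, haA⟩ ≠ 1 := by
        intro h
        have := SimpleGraph.dist_eq_one_iff_adj.mp h
        exact hnadj this
      omega
    exact le_trans hxa (dist_le_mecc W x _)
  have hrad : 2 ≤ W.mrad :=
    le_csInf (Set.range_nonempty _) (by rintro _ ⟨x, rfl⟩; exact hWecc x)
  refine ⟨hrad, ?_⟩
  -- Now find four distinct vertices in the annulus.
  set x₀ : ↥G.mannulus := ⟨v₀, hv₀⟩
  obtain ⟨u, hu⟩ := mecc_exists W x₀
  have hu2 : 2 ≤ W.dist x₀ u := by rw [hu]; exact hWecc x₀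
  have hfd : ∀ a b, W.Adj a b → W.dist x₀ a ≤ W.dist x₀ b + 1 := by
    intro a b hab
    have ht : W.dist x₀ a ≤ W.dist x₀ b + W.dist b a := hWc.dist_triangle
    have h1 : W.dist b a = 1 := SimpleGraph.dist_eq_one_iff_adj.mpr hab.symm
    omega
  obtain ⟨p, hp⟩ := hWc.exists_walk_length_eq_dist x₀ u
  obtain ⟨y, hy, -⟩ := walk_ivt W (W.dist x₀) hfd p 2
    (by simp [SimpleGraph.dist_self]) hu2
  -- hy : W.dist x₀ y = 2; find the midpoint w
  obtain ⟨q, hq⟩ := hWc.exists_walk_length_eq_dist x₀ y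
  rw [hy] at hq
  obtain ⟨w, hw1, hw2⟩ : ∃ w, W.Adj x₀ w ∧ W.Adj w y := by
    cases q with
    | nil => simp at hq
    | cons h q' =>
      cases q' with
      | nil => simp at hq
      | cons h' q'' =>
        cases q'' with
        | nil => exact ⟨_, h, h'⟩
        | cons h'' q''' => simp [SimpleGraph.Walk.length_cons] at hq
  obtain ⟨z, hz⟩ := mecc_exists W w
  have hz2 : 2 ≤ W.dist w z := by rw [hz]; exact hWecc w
  have hwx : W.dist w x₀ = 1 := SimpleGraph.dist_eq_one_iff_adj.mpr hw1.symm
  have hwy : W.dist w y = 1 := SimpleGraph.dist_eq_one_iff_adj.mpr hw2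
  -- distinctness
  have d1 : x₀ ≠ w := hw1.ne
  have d2 : x₀ ≠ y := by
    intro h; rw [← h, SimpleGraph.dist_self] at hy; omega
  have d3 : x₀ ≠ z := by
    intro h; rw [← h] at hz2; omega
  have d4 : w ≠ y := hw2.ne
  have d5 : w ≠ z := by
    intro h; rw [← h, SimpleGraph.dist_self] at hz2; omega
  have d6 : y ≠ z := by
    intro h; rw [← h] at hz2; omega
  -- count
  have hcard : ({x₀, w, y, z} : Finset ↥G.mannulus).card = 4 := by
    rw [Finset.card_insert_of_notMem (by simp [d1, d2, d3]),
      Finset.card_insert_of_notMem (by simp [d4, d5]),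
      Finset.card_insert_of_notMem (by simp [d6]),
      Finset.card_singleton]
  have h4 : 4 ≤ Fintype.card ↥G.mannulus := by
    rw [← hcard]; exact Finset.card_le_univ _
  have : G.mannulus.ncard = Fintype.card ↥G.mannulus := by
    rw [← Nat.card_coe_set_eq, Nat.card_eq_fintype_card]
  omega
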